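/- arXiv:2602.08264 — 2 statements merged into one kernel-verified Lean document; each statement's English description precedes it below -/
import Mathlib

section
/- Let p be a prime and M ≥ 1 an integer, let (λ,θ) ∈ A, and let (λ̃,θ̃) = S₁(λ,θ). If λ̃_{i−1} = λ̃_i for some 2 ≤ i ≤ M, then λ̃_i + θ̃_i ≡ 0 (mod p). -/
open Function

/-- The state of the Serganova algorithm: a pair `(λ, θ) ∈ ℤ^M × ℤ^{M+1}`.
Indices are 0-based, so the paper's `λ_i` (for `1 ≤ i ≤ M`) is `s.1 ⟨i-1,_⟩`
and the paper's `θ_j` (for `1 ≤ j ≤ M+1`) is `s.2 ⟨j-1,_⟩`. -/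
abbrev SState (M : ℕ) := (Fin M → ℤ) × (Fin (M + 1) → ℤ)

/-- One step of the Serganova algorithm, processing the (0-based) pair `(i, j)`:
if `λ_i + θ_j ≡ 0 (mod p)` nothing changes, otherwise `λ_i` is decreased by `1`
and `θ_j` is increased by `1`. -/
def sStep (p M : ℕ) (ij : Fin M × Fin (M + 1)) (s : SState M) : SState M :=
  if (p : ℤ) ∣ s.1 ij.1 + s.2 ij.2 then s
  else (Function.update s.1 ij.1 (s.1 ij.1 - 1),
        Function.update s.2 ij.2 (s.2 ij.2 + 1))

/-- One step of the inverse algorithm, processing the (0-based) pair `(i, j)`: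
if `λ_i + θ_j ≡ 0 (mod p)` nothing changes, otherwise `λ_i` is increased by `1`
and `θ_j` is decreased by `1`. -/
def tStep (p M : ℕ) (ij : Fin M × Fin (M + 1)) (s : SState M) : SState M :=
  if (p : ℤ) ∣ s.1 ij.1 + s.2 ij.2 then s
  else (Function.update s.1 ij.1 (s.1 ij.1 + 1),
        Function.update s.2 ij.2 (s.2 ij.2 - 1))

/-- Run the Serganova algorithm along a list of pairs. -/
def sRun (p M : ℕ) (l : List (Fin M × Fin (M + 1))) (s : SState M) : SState M :=
  l.foldl (fun s ij => sStep p M ij s) s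

/-- Run the inverse algorithm along a list of pairs. -/
def tRun (p M : ℕ) (l : List (Fin M × Fin (M + 1))) (s : SState M) : SState M :=
  l.foldl (fun s ij => tStep p M ij s) s

/-- The Version 1 order on the pair set `P = {(i,j) : 0 ≤ j ≤ i ≤ M-1}` (0-based):
`j` increasing, and for fixed `j`, `i` decreasing from `M-1` down to `j`.
This is the paper's order `(M,1),(M-1,1),…,(1,1),(M,2),…,(2,2),…,(M,M)`. -/
def order1 (M : ℕ) : List (Fin M × Fin (M + 1)) :=
  (List.finRange M).flatMap fun j =>
    ((List.finRange M).reverse.filter fun i => j ≤ i).map fun i => (i, j.castSucc)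

/-- The Version 2 order on the pair set `P` (0-based):
`i` decreasing from `M-1` down to `0`, and for fixed `i`, `j` increasing from `0` to `i`.
This is the paper's order `(M,1),(M,2),…,(M,M),(M-1,1),…,(M-1,M-1),…,(1,1)`. -/
def order2 (M : ℕ) : List (Fin M × Fin (M + 1)) :=
  (List.finRange M).reverse.flatMap fun i =>
    ((List.finRange M).filter fun j => j ≤ i).map fun j => (i, j.castSucc)

/-- The Serganova map `S₁` (Version 1 order). -/
def S1 (p M : ℕ) (s : SState M) : SState M := sRun p M (order1 M) s

/-- The Serganova map `S₂` (Version 2 order). -/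
def S2 (p M : ℕ) (s : SState M) : SState M := sRun p M (order2 M) s

/-- The inverse algorithm `T₁`: inverse steps, pairs processed in reverse Version 1 order. -/
def T1 (p M : ℕ) (s : SState M) : SState M := tRun p M (order1 M).reverse s

/-- The inverse algorithm `T₂`: inverse steps, pairs processed in reverse Version 2 order. -/
def T2 (p M : ℕ) (s : SState M) : SState M := tRun p M (order2 M).reverse s

/-- The set `A` of dominant pairs: `λ_1 ≥ … ≥ λ_M` and `θ_1 ≥ … ≥ θ_{M+1}`. -/
def domA (M : ℕ) : Set (SState M) := {s | Antitone s.1 ∧ Antitone s.2}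

/-- The set `𝕄`: dominant pairs such that (in 1-based terms) for `2 ≤ i ≤ M`,
`λ_{i-1} = λ_i → p ∣ λ_i + θ_i`, and for `1 ≤ i ≤ M`, `θ_i = θ_{i+1} → p ∣ λ_i + θ_i`. -/
def setM (p M : ℕ) : Set (SState M) :=
  {s | Antitone s.1 ∧ Antitone s.2 ∧
    (∀ (i : ℕ) (hi : i + 1 < M),
      s.1 ⟨i, by omega⟩ = s.1 ⟨i + 1, hi⟩ →
        (p : ℤ) ∣ s.1 ⟨i + 1, hi⟩ + s.2 ⟨i + 1, by omega⟩) ∧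
    (∀ (i : ℕ) (hi : i < M),
      s.2 ⟨i, by omega⟩ = s.2 ⟨i + 1, by omega⟩ →
        (p : ℤ) ∣ s.1 ⟨i, hi⟩ + s.2 ⟨i, by omega⟩)}

/-! ### Auxiliary development for Statement 6 -/

section Aux

/-- Descending list of naturals `[lo+n-1, lo+n-2, …, lo]`. -/
def descNat (lo : ℕ) : ℕ → List ℕ
  | 0 => []
  | n + 1 => (lo + n) :: descNat lo n

/-- The descending column `[(lo+n-1, j), …, (lo, j)]` as pairs of `Fin`s. -/
def dcol (M : ℕ) (j : Fin (M + 1)) (lo : ℕ) : (n : ℕ) → lo + n ≤ M → List (Fin M × Fin (M + 1))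
  | 0, _ => []
  | n + 1, h => (⟨lo + n, by omega⟩, j) :: dcol M j lo n (by omega)

lemma filter_range_reverse (lo : ℕ) : ∀ M, lo ≤ M →
    ((List.range M).reverse.filter (fun n => lo ≤ n)) = descNat lo (M - lo) := by
  intro M
  induction M with
  | zero =>
    intro h
    interval_cases lo
    simp [descNat]
  | succ M ih =>
    intro h
    rw [List.range_succ, List.reverse_append]
    simp only [List.reverse_cons, List.reverse_nil, List.nil_append, List.singleton_append]
    rcases Nat.lt_or_ge M lo with hlo | hlo
    · -- lo = M + 1
      have hlo' : lo = M + 1 := by omega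
      subst hlo'
      rw [List.filter_cons_of_neg (by simp), List.filter_eq_nil_iff.mpr, Nat.sub_self]
      · rfl
      · intro a ha
        simp only [List.mem_reverse, List.mem_range] at ha
        simp only [decide_eq_true_eq]
        omega
    · rw [List.filter_cons_of_pos (by simpa using hlo), ih hlo]
      have h1 : M + 1 - lo = (M - lo) + 1 := by omega
      rw [h1]
      show _ = (lo + (M - lo)) :: descNat lo (M - lo)
      rw [Nat.add_sub_cancel' hlo]

lemma map_val_filter {M : ℕ} (j : Fin M) (l : List (Fin M)) :
    (l.filter fun i => j ≤ i).map Fin.val = (l.map Fin.val).filter (fun n => j.val ≤ n) := by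
  induction l with
  | nil => simp
  | cons a t ih =>
    by_cases hja : j ≤ a
    · rw [List.filter_cons_of_pos (by simpa using hja), List.map_cons, List.map_cons,
        List.filter_cons_of_pos (by simpa using (Fin.le_def.mp hja)), ih]
    · rw [List.filter_cons_of_neg (by simpa using hja), List.map_cons,
        List.filter_cons_of_neg (by simpa using fun hv => hja (Fin.le_def.mpr hv)), ih]

lemma dcol_map_val {M : ℕ} (j : Fin (M + 1)) (lo : ℕ) :
    ∀ (n : ℕ) (h : lo + n ≤ M),
      (dcol M j lo n h).map (fun x => (x.1.val, x.2.val)) =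
        (descNat lo n).map (fun m => (m, j.val)) := by
  intro n
  induction n with
  | zero => intro h; simp [dcol, descNat]
  | succ n ih => intro h; simp [dcol, descNat, ih]

lemma col_eq {M : ℕ} (j : Fin M) :
    (((List.finRange M).reverse.filter fun i => j ≤ i).map fun i => (i, j.castSucc)) =
      dcol M j.castSucc j.val (M - j.val) (by omega) := by
  have hval : j.val + (M - j.val) ≤ M := by omega
  have ginj : Function.Injective (fun x : Fin M × Fin (M + 1) => (x.1.val, x.2.val)) := by
    intro x y hxy
    simp only [Prod.mk.injEq] at hxy
    exact Prod.ext (Fin.val_injective hxy.1) (Fin.val_injective hxy.2)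
  apply List.map_injective_iff.mpr ginj
  rw [dcol_map_val, List.map_map]
  have : ((fun x : Fin M × Fin (M + 1) => (x.1.val, x.2.val)) ∘ fun i => (i, j.castSucc)) =
      (fun m => (m, j.val)) ∘ Fin.val := rfl
  rw [this, ← List.map_map, map_val_filter, List.map_reverse,
    (show (List.finRange M).map Fin.val = List.range M from List.ext_getElem (by simp) (by simp)),
    filter_range_reverse j.val M (le_of_lt j.isLt)]
  simp [Fin.castSucc]

lemma sRun_append (p M : ℕ) (l₁ l₂ : List (Fin M × Fin (M + 1))) (s : SState M) :
    sRun p M (l₁ ++ l₂) s = sRun p M l₂ (sRun p M l₁ s) := by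
  simp [sRun, List.foldl_append]

lemma sRun_flatMap {α : Type*} (p M : ℕ) (f : α → List (Fin M × Fin (M + 1))) :
    ∀ (L : List α) (s : SState M),
      sRun p M (L.flatMap f) s = L.foldl (fun s a => sRun p M (f a) s) s := by
  intro L
  induction L with
  | nil => intro s; rfl
  | cons a L ih =>
    intro s
    rw [List.flatMap_cons, sRun_append, ih]
    rfl

lemma antitone_update_sub_one {M : ℕ} {f : Fin M → ℤ} (hf : Antitone f) (t : Fin M)
    (ht : ∀ hb : t.val + 1 < M, f ⟨t.val + 1, hb⟩ < f t) :
    Antitone (Function.update f t (f t - 1)) := by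
  intro a b hab
  rcases eq_or_ne b t with rfl | hb
  · rcases eq_or_ne a b with rfl | ha
    · exact le_refl _
    · rw [Function.update_self, Function.update_of_ne ha]
      have := hf hab
      omega
  · rw [Function.update_of_ne hb]
    rcases eq_or_ne a t with rfl | ha
    · rw [Function.update_self]
      have hab' : a < b := lt_of_le_of_ne hab (Ne.symm hb)
      have h1 : a.val + 1 < M := by
        have := b.isLt
        have := Fin.lt_def.mp hab'
        omega
      have h2 := ht h1
      have h3 : f b ≤ f ⟨a.val + 1, h1⟩ := hf (by
        rw [Fin.le_def]
        exact Fin.lt_def.mp hab')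
      omega
    · rw [Function.update_of_ne ha]
      exact hf hab

end Aux

section Colind

lemma sStep_of_dvd {p M : ℕ} {ij : Fin M × Fin (M + 1)} {s : SState M}
    (h : (p : ℤ) ∣ s.1 ij.1 + s.2 ij.2) : sStep p M ij s = s := if_pos h

lemma sStep_of_not_dvd {p M : ℕ} {ij : Fin M × Fin (M + 1)} {s : SState M}
    (h : ¬ (p : ℤ) ∣ s.1 ij.1 + s.2 ij.2) :
    sStep p M ij s = (Function.update s.1 ij.1 (s.1 ij.1 - 1),
        Function.update s.2 ij.2 (s.2 ij.2 + 1)) := if_neg h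

/-- The key invariant for one column of the Version 1 algorithm. -/
lemma colind (p M : ℕ) (j : Fin (M + 1)) (lo : ℕ) :
    ∀ (n : ℕ) (h : lo + n ≤ M) (s : SState M),
      Antitone s.1 →
      (∀ (hn : lo + n < M), 1 ≤ n →
        s.1 ⟨lo + n - 1, by omega⟩ = s.1 ⟨lo + n, hn⟩ →
          (p : ℤ) ∣ s.1 ⟨lo + n, hn⟩ + s.2 j) →
      Antitone (sRun p M (dcol M j lo n h) s).1 ∧
      (∀ a : Fin M, a.val < lo → (sRun p M (dcol M j lo n h) s).1 a = s.1 a) ∧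
      (∀ a : Fin (M + 1), a ≠ j → (sRun p M (dcol M j lo n h) s).2 a = s.2 a) ∧
      (∀ (_ : 1 ≤ n) (hlo : lo < M),
        (p : ℤ) ∣ (sRun p M (dcol M j lo n h) s).1 ⟨lo, hlo⟩ +
            (sRun p M (dcol M j lo n h) s).2 j ∨
          (sRun p M (dcol M j lo n h) s).1 ⟨lo, hlo⟩ < s.1 ⟨lo, hlo⟩) := by
  intro n
  induction n with
  | zero =>
    intro h s h1 h2
    refine ⟨h1, fun a _ => rfl, fun a _ => rfl, fun hn _ => by omega⟩
  | succ n ih =>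
    intro h s h1 h2
    have hlt : lo + n < M := by omega
    set t : Fin M := ⟨lo + n, hlt⟩ with ht
    have hrun : ∀ u : SState M, sRun p M (dcol M j lo (n + 1) h) u
        = sRun p M (dcol M j lo n (by omega)) (sStep p M (t, j) u) := fun u => rfl
    by_cases hd : (p : ℤ) ∣ s.1 t + s.2 j
    · -- the step is a no-op
      have e : sStep p M (t, j) s = s := sStep_of_dvd hd
      rw [hrun, e]
      obtain ⟨C1, C2, C3, C4⟩ := ih (by omega) s h1 (fun hn _ _ => hd)
      refine ⟨C1, C2, C3, fun _ hlo => ?_⟩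
      rcases Nat.eq_zero_or_pos n with hn0 | hn0
      · subst hn0
        left
        have : sRun p M (dcol M j lo 0 (by omega)) s = s := rfl
        rw [this]
        exact hd
      · exact C4 hn0 hlo
    · -- the step is active
      have e : sStep p M (t, j) s = (Function.update s.1 t (s.1 t - 1),
          Function.update s.2 j (s.2 j + 1)) := sStep_of_not_dvd hd
      set s' : SState M := (Function.update s.1 t (s.1 t - 1),
          Function.update s.2 j (s.2 j + 1)) with hs'
      -- strictness above t
      have hstrict : ∀ hb : t.val + 1 < M, s.1 ⟨t.val + 1, hb⟩ < s.1 t := by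
        intro hb
        by_contra hcon
        push_neg at hcon
        have hle : s.1 ⟨t.val + 1, hb⟩ ≤ s.1 t := h1 (by simp [Fin.le_def])
        have heq : s.1 t = s.1 ⟨t.val + 1, hb⟩ := le_antisymm hcon hle
        have hb' : lo + (n + 1) < M := by simp [ht] at hb; omega
        have e1 : (⟨lo + (n + 1) - 1, by omega⟩ : Fin M) = t := by
          apply Fin.ext
          simp only [ht]
          omega
        have e2 : (⟨lo + (n + 1), hb'⟩ : Fin M) = ⟨t.val + 1, hb⟩ := by
          apply Fin.ext
          simp only [ht]
          omega
        have hdvd2 := h2 hb' (by omega) (by rw [e1, e2]; exact heq)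
        rw [e2] at hdvd2
        exact hd (by rw [heq]; exact hdvd2)
      have A1 : Antitone s'.1 := antitone_update_sub_one h1 t hstrict
      have A2 : ∀ hn : lo + n < M, 1 ≤ n →
          s'.1 ⟨lo + n - 1, by omega⟩ = s'.1 ⟨lo + n, hn⟩ →
            (p : ℤ) ∣ s'.1 ⟨lo + n, hn⟩ + s'.2 j := by
        intro hn hn1 heq
        exfalso
        have e1 : (⟨lo + n, hn⟩ : Fin M) = t := rfl
        have hne : (⟨lo + n - 1, by omega⟩ : Fin M) ≠ t := by
          simp only [ht, ne_eq, Fin.mk.injEq]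
          omega
        rw [e1] at heq
        have hl : s'.1 ⟨lo + n - 1, by omega⟩ = s.1 ⟨lo + n - 1, by omega⟩ := by
          simp only [hs']
          exact Function.update_of_ne hne _ _
        have hr : s'.1 t = s.1 t - 1 := by
          simp only [hs']
          exact Function.update_self _ _ _
        have hmono : s.1 t ≤ s.1 ⟨lo + n - 1, by omega⟩ := h1 (by
          rw [Fin.le_def]
          simp only [ht]
          omega)
        rw [hl, hr] at heq
        omega
      obtain ⟨C1, C2, C3, C4⟩ := ih (by omega) s' A1 A2
      rw [hrun, e]
      refine ⟨C1, fun a ha => ?_, fun a ha => ?_, fun _ hlo => ?_⟩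
      · rw [C2 a ha]
        simp only [hs']
        exact Function.update_of_ne (by simp only [ht, ne_eq, Fin.ext_iff]; omega) _ _
      · rw [C3 a ha]
        simp only [hs']
        exact Function.update_of_ne ha _ _
      · rcases Nat.eq_zero_or_pos n with hn0 | hn0
        · subst hn0
          right
          have hrw : sRun p M (dcol M j lo 0 (by omega)) s' = s' := rfl
          rw [hrw]
          have e2 : (⟨lo, hlo⟩ : Fin M) = t := by
            simp only [ht, Fin.ext_iff]
            omega
          rw [e2]
          have : s'.1 t = s.1 t - 1 := by
            simp only [hs']
            exact Function.update_self _ _ _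
          rw [this]
          omega
        · rcases C4 hn0 hlo with hc | hc
          · exact Or.inl hc
          · right
            refine lt_of_lt_of_le hc ?_
            have : s'.1 ⟨lo, hlo⟩ = s.1 ⟨lo, hlo⟩ := by
              simp only [hs']
              exact Function.update_of_ne (by simp only [ht, ne_eq, Fin.ext_iff]; omega) _ _
            rw [this]

end Colind

section Glue

lemma order1_eq (M : ℕ) : order1 M =
    (List.finRange M).flatMap fun j =>
      dcol M j.castSucc j.val (M - j.val) (by omega) := by
  unfold order1
  congr 1
  funext j
  exact col_eq j

/-- Processing one full column, as a function of the column index. -/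
def colF (p M : ℕ) : SState M → Fin M → SState M :=
  fun s j => sRun p M (dcol M j.castSucc j.val (M - j.val) (by omega)) s

lemma S1_eq_fold (p M : ℕ) (s : SState M) :
    S1 p M s = (List.finRange M).foldl (colF p M) s := by
  rw [S1, order1_eq, sRun_flatMap]
  rfl

lemma colF_antitone (p M : ℕ) (s : SState M) (j : Fin M) (hs : Antitone s.1) :
    Antitone (colF p M s j).1 :=
  (colind p M j.castSucc j.val (M - j.val) (by omega) s hs
    (fun hn _ => absurd hn (by omega))).1

lemma fold_antitone (p M : ℕ) :
    ∀ (L : List (Fin M)) (s : SState M), Antitone s.1 →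
      Antitone ((L.foldl (colF p M) s).1) := by
  intro L
  induction L with
  | nil => intro s hs; exact hs
  | cons j L ih =>
    intro s hs
    exact ih (colF p M s j) (colF_antitone p M s j hs)

lemma fold_untouched (p M : ℕ) (k : ℕ) :
    ∀ (L : List (Fin M)) (s : SState M), Antitone s.1 → (∀ j ∈ L, k ≤ j.val) →
      (∀ a : Fin M, a.val < k → (L.foldl (colF p M) s).1 a = s.1 a) ∧
      (∀ b : Fin (M + 1), b.val < k → (L.foldl (colF p M) s).2 b = s.2 b) := by
  intro L
  induction L with
  | nil => intro s hs hL; exact ⟨fun a _ => rfl, fun b _ => rfl⟩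
  | cons j L ih =>
    intro s hs hL
    have hjk : k ≤ j.val := hL j List.mem_cons_self
    obtain ⟨C1, C2, C3, _⟩ := colind p M j.castSucc j.val (M - j.val) (by omega) s hs
      (fun hn _ => absurd hn (by omega))
    obtain ⟨D1, D2⟩ := ih (colF p M s j) C1 (fun j' hj' => hL j' (List.mem_cons_of_mem j hj'))
    constructor
    · intro a ha
      rw [List.foldl_cons, D1 a ha]
      exact C2 a (by omega)
    · intro b hb
      rw [List.foldl_cons, D2 b hb]
      exact C3 b (by
        intro hbj
        have : b.val = j.val := by rw [hbj]; rfl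
        omega)

end Glue

/-- If `(λ̃,θ̃) = S₁(λ,θ)` for a dominant pair `(λ,θ)` and
`λ̃_{i-1} = λ̃_i` (1-based, `2 ≤ i ≤ M`), then `p ∣ λ̃_i + θ̃_i`. -/
theorem serganova_v1_lambda_congruence (p M : ℕ) (hp : p.Prime) (hM : 1 ≤ M)
    (s : SState M) (hs : s ∈ domA M) (i : ℕ) (hi : i + 1 < M)
    (h : (S1 p M s).1 ⟨i, by omega⟩ = (S1 p M s).1 ⟨i + 1, hi⟩) :
    (p : ℤ) ∣ (S1 p M s).1 ⟨i + 1, hi⟩ + (S1 p M s).2 ⟨i + 1, by omega⟩ := by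
  obtain ⟨hsA, -⟩ := hs
  have hlen : i + 1 < (List.finRange M).length := by
    rw [List.length_finRange]; exact hi
  have hget : (List.finRange M)[i + 1]'hlen = ⟨i + 1, hi⟩ := by
    simp
  have hsplit : List.finRange M =
      (List.finRange M).take (i + 1) ++
        ((⟨i + 1, hi⟩ : Fin M) :: (List.finRange M).drop (i + 2)) := by
    conv_lhs => rw [← List.take_append_drop (i + 1) (List.finRange M)]
    rw [List.drop_eq_getElem_cons hlen, hget]
  set s0 : SState M := ((List.finRange M).take (i + 1)).foldl (colF p M) s with hs0
  set u : SState M := colF p M s0 ⟨i + 1, hi⟩ with hu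
  have hfold : S1 p M s = ((List.finRange M).drop (i + 2)).foldl (colF p M) u := by
    rw [S1_eq_fold]
    conv_lhs => rw [hsplit]
    rw [List.foldl_append, List.foldl_cons]
  have hs0A : Antitone s0.1 := fold_antitone p M _ s hsA
  have huA : Antitone u.1 := colF_antitone p M s0 ⟨i + 1, hi⟩ hs0A
  obtain ⟨C1, C2, C3, C4⟩ := colind p M (⟨i + 1, hi⟩ : Fin M).castSucc (i + 1)
    (M - (i + 1)) (by omega) s0 hs0A (fun hn _ => absurd hn (by omega))
  have hmem : ∀ j' ∈ (List.finRange M).drop (i + 2), i + 2 ≤ j'.val := by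
    intro j' hj'
    obtain ⟨m, hm, hget'⟩ := List.getElem_of_mem hj'
    have : j'.val = i + 2 + m := by rw [← hget']; simp
    omega
  obtain ⟨D1, D2⟩ := fold_untouched p M (i + 2) ((List.finRange M).drop (i + 2)) u huA hmem
  rw [hfold] at h ⊢
  have hA : (((List.finRange M).drop (i + 2)).foldl (colF p M) u).1 ⟨i, by omega⟩ =
      u.1 ⟨i, by omega⟩ := D1 _ (by show i < i + 2; omega)
  have hB : (((List.finRange M).drop (i + 2)).foldl (colF p M) u).1 ⟨i + 1, hi⟩ =
      u.1 ⟨i + 1, hi⟩ := D1 _ (by show i + 1 < i + 2; omega)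
  have hD : (((List.finRange M).drop (i + 2)).foldl (colF p M) u).2 ⟨i + 1, by omega⟩ =
      u.2 ⟨i + 1, by omega⟩ := D2 _ (by show i + 1 < i + 2; omega)
  rw [hB, hD]
  have h' : u.1 ⟨i, by omega⟩ = u.1 ⟨i + 1, hi⟩ := by rw [← hA, ← hB]; exact h
  have hC4' : (p : ℤ) ∣ u.1 ⟨i + 1, hi⟩ + u.2 ⟨i + 1, by omega⟩ ∨
      u.1 ⟨i + 1, hi⟩ < s0.1 ⟨i + 1, hi⟩ := C4 (by omega) (by omega)
  rcases hC4' with hdvd | hlt2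
  · exact hdvd
  · exfalso
    have h1 : u.1 ⟨i, by omega⟩ = s0.1 ⟨i, by omega⟩ := C2 ⟨i, by omega⟩ (by show i < i + 1; omega)
    have h2 : s0.1 ⟨i + 1, hi⟩ ≤ s0.1 ⟨i, by omega⟩ := hs0A (Fin.mk_le_mk.mpr (by omega))
    have hcontra : u.1 ⟨i + 1, hi⟩ < u.1 ⟨i + 1, hi⟩ := by
      calc u.1 ⟨i + 1, hi⟩ < s0.1 ⟨i + 1, hi⟩ := hlt2
        _ ≤ s0.1 ⟨i, by omega⟩ := h2
        _ = u.1 ⟨i, by omega⟩ := h1.symm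
        _ = u.1 ⟨i + 1, hi⟩ := h'
    exact absurd hcontra (lt_irrefl _)
end

section
/- Let p be a prime and M ≥ 1 an integer. Then T₁ ∘ S₁ is the identity map of ℤ^M × ℤ^{M+1}, and S₁ ∘ T₁ is the identity map of ℤ^M × ℤ^{M+1}; in particular S₁ is a bijection of ℤ^M × ℤ^{M+1} with inverse T₁. -/
open Function

lemma tStep_sStep (p M : ℕ) (ij : Fin M × Fin (M + 1)) (s : SState M) :
    tStep p M ij (sStep p M ij s) = s := by
  unfold sStep tStep
  by_cases h : (p : ℤ) ∣ s.1 ij.1 + s.2 ij.2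
  · simp [h]
  · have h1 : (Function.update s.1 ij.1 (s.1 ij.1 - 1)) ij.1 = s.1 ij.1 - 1 :=
      Function.update_self _ _ _
    have h2 : (Function.update s.2 ij.2 (s.2 ij.2 + 1)) ij.2 = s.2 ij.2 + 1 :=
      Function.update_self _ _ _
    simp only [if_neg h, h1, h2]
    rw [if_neg (by rw [show s.1 ij.1 - 1 + (s.2 ij.2 + 1) = s.1 ij.1 + s.2 ij.2 by ring]; exact h)]
    simp [Function.update_idem, Function.update_eq_self]

lemma sStep_tStep (p M : ℕ) (ij : Fin M × Fin (M + 1)) (s : SState M) :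
    sStep p M ij (tStep p M ij s) = s := by
  unfold sStep tStep
  by_cases h : (p : ℤ) ∣ s.1 ij.1 + s.2 ij.2
  · simp [h]
  · have h1 : (Function.update s.1 ij.1 (s.1 ij.1 + 1)) ij.1 = s.1 ij.1 + 1 :=
      Function.update_self _ _ _
    have h2 : (Function.update s.2 ij.2 (s.2 ij.2 - 1)) ij.2 = s.2 ij.2 - 1 :=
      Function.update_self _ _ _
    simp only [if_neg h, h1, h2]
    rw [if_neg (by rw [show s.1 ij.1 + 1 + (s.2 ij.2 - 1) = s.1 ij.1 + s.2 ij.2 by ring]; exact h)]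
    simp [Function.update_idem, Function.update_eq_self]

lemma tRun_sRun (p M : ℕ) (l : List (Fin M × Fin (M + 1))) (s : SState M) :
    tRun p M l.reverse (sRun p M l s) = s := by
  induction l generalizing s with
  | nil => rfl
  | cons a l ih =>
    simp only [sRun, tRun, List.reverse_cons, List.foldl_cons, List.foldl_append,
      List.foldl_cons, List.foldl_nil]
    rw [show List.foldl (fun s ij => tStep p M ij s) (List.foldl (fun s ij => sStep p M ij s) (sStep p M a s) l) l.reverse = tRun p M l.reverse (sRun p M l (sStep p M a s)) from rfl, ih]
    exact tStep_sStep p M a s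

lemma sRun_tRun (p M : ℕ) (l : List (Fin M × Fin (M + 1))) (s : SState M) :
    sRun p M l (tRun p M l.reverse s) = s := by
  induction l generalizing s with
  | nil => rfl
  | cons a l ih =>
    simp only [sRun, tRun, List.reverse_cons, List.foldl_cons, List.foldl_append,
      List.foldl_nil]
    rw [show List.foldl (fun s ij => tStep p M ij s) s l.reverse = tRun p M l.reverse s from rfl,
      sStep_tStep]
    exact ih _

/-- `T₁ ∘ S₁ = id` and `S₁ ∘ T₁ = id` on `ℤ^M × ℤ^{M+1}`;
in particular `S₁` is a bijection with inverse `T₁`. -/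
theorem serganova_inverse (p M : ℕ) (hp : p.Prime) (hM : 1 ≤ M) :
    T1 p M ∘ S1 p M = id ∧ S1 p M ∘ T1 p M = id ∧ Function.Bijective (S1 p M) := by
  refine ⟨?_, ?_, ?_⟩
  · funext s; exact tRun_sRun p M (order1 M) s
  · funext s; exact sRun_tRun p M (order1 M) s
  · exact Function.bijective_iff_has_inverse.mpr ⟨T1 p M,
      fun s => tRun_sRun p M (order1 M) s, fun s => sRun_tRun p M (order1 M) s⟩
end
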